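/- Let Θ be a nonempty set of Borel probability measures on ℝ with sup_{μ ∈ Θ} ∫ |x|^{1+α} dμ = M < ∞, α ∈ (0,1], and set N[ψ] = sup_{μ∈Θ} ∫ ψ dμ, p(a) = sup_{μ∈Θ} ∫ a x dμ. Let φ : ℝ → ℝ be C¹ with α-Hölder derivative of seminorm [φ']_α. Then |N[φ] − φ(0) − p(φ'(0))| ≤ [φ']_α · M. -/

import Mathlib

open Set MeasureTheory

lemma stein_taylor_bound
    (α : ℝ) (hα : 0 < α)
    (φ : ℝ → ℝ) (hC1 : ContDiff ℝ 1 φ)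
    (L : ℝ)
    (hHolder : ∀ x y, |deriv φ x - deriv φ y| ≤ L * |x - y| ^ α)
    (x : ℝ) : |φ x - φ 0 - deriv φ 0 * x| ≤ L * |x| ^ (1 + α) := by
  set c := deriv φ 0 with hc
  have hdiff : Differentiable ℝ φ := hC1.differentiable one_ne_zero
  have hg : Differentiable ℝ (fun t => φ t - c * t) := by
    exact hdiff.sub (differentiable_id.const_mul c)
  have hgderiv : ∀ t : ℝ, deriv (fun t => φ t - c * t) t = deriv φ t - c := by
    intro t
    have h : HasDerivAt (fun t => φ t - c * t) (deriv φ t - c) t := by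
      have h0 := ((hdiff t).hasDerivAt.sub ((hasDerivAt_id t).const_mul c))
      simp only [mul_one] at h0
      exact h0
    exact h.deriv
  set s : Set ℝ := Icc (min 0 x) (max 0 x) with hs
  have hsub : ∀ t ∈ s, |t| ≤ |x| := by
    intro t ht
    rw [hs, mem_Icc] at ht
    rw [abs_le]
    constructor
    · exact le_trans (le_min (neg_nonpos_of_nonneg (abs_nonneg x)) (neg_abs_le x)) ht.1
    · exact le_trans ht.2 (max_le (abs_nonneg x) (le_abs_self x))
  have hbound : ∀ t ∈ s, ‖deriv (fun t => φ t - c * t) t‖ ≤ L * |x| ^ α := by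
    intro t ht
    rw [hgderiv t]
    have h1 := hHolder t 0
    simp only [sub_zero] at h1
    refine le_trans h1 ?_
    have hLnn : 0 ≤ L := by
      have h := le_trans (abs_nonneg (deriv φ 1 - deriv φ 0)) (hHolder 1 0)
      simpa [Real.one_rpow] using h
    exact mul_le_mul_of_nonneg_left
      (Real.rpow_le_rpow (abs_nonneg t) (hsub t ht) (le_of_lt hα)) hLnn
  have hmvt := Convex.norm_image_sub_le_of_norm_deriv_le
    (f := fun t => φ t - c * t) (s := s)
    (fun t _ => hg t) hbound (convex_Icc _ _)
    (by rw [hs, mem_Icc]; exact ⟨min_le_left _ _, le_max_left _ _⟩)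
    (by rw [hs, mem_Icc]; exact ⟨min_le_right _ _, le_max_right _ _⟩)
  simp only [mul_zero, sub_zero, Real.norm_eq_abs] at hmvt
  have heq : φ x - c * x - φ 0 = φ x - φ 0 - c * x := by ring
  rw [heq] at hmvt
  refine le_trans hmvt (le_of_eq ?_)
  rcases eq_or_ne x 0 with rfl | hx
  · simp [Real.zero_rpow (by positivity : (1:ℝ) + α ≠ 0),
      Real.zero_rpow (ne_of_gt hα)]
  · have hxpos : 0 < |x| := abs_pos.mpr hx
    rw [Real.rpow_add hxpos, Real.rpow_one]
    ring

theorem stein_first_order_estimate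
    (α : ℝ) (hα : 0 < α) (hα1 : α ≤ 1)
    (M : ℝ)
    (Θ : Set (Measure ℝ)) (hne : Θ.Nonempty)
    (hprob : ∀ μ ∈ Θ, IsProbabilityMeasure μ)
    (hmomInt : ∀ μ ∈ Θ, Integrable (fun x => |x| ^ (1 + α)) μ)
    (hmomBdd : ∀ μ ∈ Θ, ∫ x, |x| ^ (1 + α) ∂μ ≤ M)
    (φ : ℝ → ℝ) (hC1 : ContDiff ℝ 1 φ)
    (L : ℝ) (hL : 0 ≤ L)
    (hHolder : ∀ x y, |deriv φ x - deriv φ y| ≤ L * |x - y| ^ α)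
    (hφInt : ∀ μ ∈ Θ, Integrable φ μ)
    (hidInt : ∀ μ ∈ Θ, Integrable (fun x : ℝ => x) μ)
    (p : ℝ → ℝ) (hp : ∀ a, p a = sSup ((fun μ => ∫ x, a * x ∂μ) '' Θ)) :
    |sSup ((fun μ => ∫ x, φ x ∂μ) '' Θ) - φ 0 - p (deriv φ 0)| ≤ L * M := by
  set c := deriv φ 0 with hc
  set S : Set ℝ := (fun μ => ∫ x, φ x ∂μ) '' Θ with hS
  set T : Set ℝ := (fun μ => ∫ x, c * x ∂μ) '' Θ with hT
  -- per-measure key estimate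
  have hkey : ∀ μ ∈ Θ, |(∫ x, φ x ∂μ) - φ 0 - ∫ x, c * x ∂μ| ≤ L * M := by
    intro μ hμ
    haveI := hprob μ hμ
    have hint1 : Integrable (fun x : ℝ => c * x) μ := (hidInt μ hμ).const_mul c
    have hintA : Integrable (fun x : ℝ => φ x - φ 0) μ :=
      (hφInt μ hμ).sub (integrable_const (φ 0))
    have heq : ∫ x, (φ x - φ 0 - c * x) ∂μ
        = (∫ x, φ x ∂μ) - φ 0 - ∫ x, c * x ∂μ := by
      rw [integral_sub hintA hint1, integral_sub (hφInt μ hμ) (integrable_const (φ 0))]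
      simp
    have hb : ‖∫ x, (φ x - φ 0 - c * x) ∂μ‖ ≤ ∫ x, L * |x| ^ (1 + α) ∂μ := by
      apply norm_integral_le_of_norm_le ((hmomInt μ hμ).const_mul L)
      filter_upwards with x
      exact stein_taylor_bound α hα φ hC1 L hHolder x
    rw [heq, Real.norm_eq_abs] at hb
    refine le_trans hb ?_
    rw [integral_const_mul]
    exact mul_le_mul_of_nonneg_left (hmomBdd μ hμ) hL
  have hM0 : 0 ≤ M := by
    obtain ⟨μ, hμ⟩ := hne
    exact le_trans (integral_nonneg fun x => Real.rpow_nonneg (abs_nonneg x) _) (hmomBdd μ hμ)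
  -- bound on T
  have hJ : ∀ μ ∈ Θ, (∫ x, c * x ∂μ) ≤ |c| * (1 + M) := by
    intro μ hμ
    haveI := hprob μ hμ
    have h1 : (∫ x, c * x ∂μ) ≤ |∫ x, c * x ∂μ| := le_abs_self _
    have hgi : Integrable (fun x : ℝ => |c| * (1 + |x| ^ (1 + α))) μ := by
      have h := ((integrable_const (1:ℝ)).add (hmomInt μ hμ)).const_mul |c|
      simpa using h
    have h2 : ‖∫ x, c * x ∂μ‖ ≤ ∫ x, |c| * (1 + |x| ^ (1 + α)) ∂μ := by
      apply norm_integral_le_of_norm_le hgi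
      filter_upwards with x
      show ‖c * x‖ ≤ |c| * (1 + |x| ^ (1 + α))
      rw [Real.norm_eq_abs, abs_mul]
      refine mul_le_mul_of_nonneg_left ?_ (abs_nonneg c)
      rcases le_or_gt (|x|) 1 with h | h
      · nlinarith [Real.rpow_nonneg (abs_nonneg x) (1 + α)]
      · have h3 : |x| ≤ |x| ^ (1 + α) := by
          calc |x| = |x| ^ (1:ℝ) := (Real.rpow_one _).symm
            _ ≤ |x| ^ (1 + α) := Real.rpow_le_rpow_of_exponent_le (le_of_lt h) (by linarith)
        linarith
    rw [Real.norm_eq_abs] at h2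
    refine le_trans (le_trans h1 h2) ?_
    rw [integral_const_mul]
    refine mul_le_mul_of_nonneg_left ?_ (abs_nonneg c)
    rw [integral_add (integrable_const 1) (hmomInt μ hμ)]
    simp only [integral_const, measure_univ, probReal_univ, ENNReal.toReal_one, smul_eq_mul, one_mul]
    linarith [hmomBdd μ hμ]
  have hTbdd : BddAbove T := by
    refine ⟨|c| * (1 + M), ?_⟩
    rintro t ⟨μ, hμ, rfl⟩
    exact hJ μ hμ
  have hSbdd : BddAbove S := by
    refine ⟨φ 0 + |c| * (1 + M) + L * M, ?_⟩
    rintro t ⟨μ, hμ, rfl⟩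
    have h1 := (abs_le.mp (hkey μ hμ)).2
    have h2 := hJ μ hμ
    simp only
    linarith
  have hSne : S.Nonempty := hne.image _
  have hTne : T.Nonempty := hne.image _
  rw [hp c]
  rw [abs_le]
  constructor
  · -- -(L*M) ≤ sSup S - φ 0 - sSup T
    have : sSup T ≤ sSup S - φ 0 + L * M := by
      apply csSup_le hTne
      rintro t ⟨μ, hμ, rfl⟩
      have h1 := (abs_le.mp (hkey μ hμ)).1
      have h2 : (∫ x, φ x ∂μ) ≤ sSup S := le_csSup hSbdd ⟨μ, hμ, rfl⟩
      simp only
      linarith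
    linarith
  · -- sSup S - φ 0 - sSup T ≤ L*M
    have : sSup S ≤ φ 0 + sSup T + L * M := by
      apply csSup_le hSne
      rintro t ⟨μ, hμ, rfl⟩
      have h1 := (abs_le.mp (hkey μ hμ)).2
      have h2 : (∫ x, c * x ∂μ) ≤ sSup T := le_csSup hTbdd ⟨μ, hμ, rfl⟩
      simp only
      linarith
    linarith
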